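/- Fix a squarefree integer n > 0, let K = ℚ(√−n) ⊆ ℂ, let O be the ring of integers of K, set u = √−n, and let 𝒲 be the subgroup of SL(2,O) generated by the Cohn matrices W(α), α ∈ O. For γ = [[a, b], [c, d]] ∈ 𝒲 put κ(γ) = c·u·conj(d) − d·u·conj(c), κ'(γ) = a·u·conj(b) − b·u·conj(a), and ξ(γ) = a·u·conj(d) − b·u·conj(c). Then for all γ, γ' ∈ 𝒲, the complex number B := −κ(γ)·κ'(γ') − κ'(γ)·κ(γ') + ξ(γ)·conj(ξ(γ')) + ξ(γ')·conj(ξ(γ)) is a rational integer with B ≡ 2n (mod n²), and if moreover n > 3 then |B| ≥ 2n. -/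

import Mathlib

open Matrix Complex

/-- The ring of integers of `K = ℚ(√−n) ⊆ ℂ`: the elements of the subfield of `ℂ`
generated by `√−n = i√n` that are integral over `ℤ`. -/
noncomputable def quadIntRing (n : ℕ) : Subring ℂ :=
  (Subfield.closure {Complex.I * (Real.sqrt n : ℂ)}).toSubring ⊓
    (integralClosure ℤ ℂ).toSubring

/-- The Cohn matrix `W(α) = [[α, 1], [−1, 0]]` as an element of `SL(2,ℂ)`. -/
def CohnMatrix (a : ℂ) : Matrix.SpecialLinearGroup (Fin 2) ℂ :=
  ⟨!![a, 1; -1, 0], by simp [Matrix.det_fin_two_of]⟩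

/-- `𝒲`: the subgroup generated by the Cohn matrices `W(α)`, `α ∈ O`. -/
noncomputable def CohnSubgroup (n : ℕ) : Subgroup (Matrix.SpecialLinearGroup (Fin 2) ℂ) :=
  Subgroup.closure {γ | ∃ α ∈ quadIntRing n, γ = CohnMatrix α}

/-- The normalized bend `κ(γ) = c·u·conj(d) − d·u·conj(c)`. -/
noncomputable def kappa (n : ℕ) (γ : Matrix.SpecialLinearGroup (Fin 2) ℂ) : ℂ :=
  γ.1 1 0 * (Complex.I * (Real.sqrt n : ℂ)) * (starRingEnd ℂ) (γ.1 1 1) -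
    γ.1 1 1 * (Complex.I * (Real.sqrt n : ℂ)) * (starRingEnd ℂ) (γ.1 1 0)

/-- The normalized co-bend `κ'(γ) = a·u·conj(b) − b·u·conj(a)`. -/
noncomputable def kappa' (n : ℕ) (γ : Matrix.SpecialLinearGroup (Fin 2) ℂ) : ℂ :=
  γ.1 0 0 * (Complex.I * (Real.sqrt n : ℂ)) * (starRingEnd ℂ) (γ.1 0 1) -
    γ.1 0 1 * (Complex.I * (Real.sqrt n : ℂ)) * (starRingEnd ℂ) (γ.1 0 0)

/-- The normalized bend-center `ξ(γ) = a·u·conj(d) − b·u·conj(c)`. -/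
noncomputable def xi (n : ℕ) (γ : Matrix.SpecialLinearGroup (Fin 2) ℂ) : ℂ :=
  γ.1 0 0 * (Complex.I * (Real.sqrt n : ℂ)) * (starRingEnd ℂ) (γ.1 1 1) -
    γ.1 0 1 * (Complex.I * (Real.sqrt n : ℂ)) * (starRingEnd ℂ) (γ.1 1 0)

lemma hu_sq (n : ℕ) : (Complex.I * (Real.sqrt n : ℂ))^2 = -(n:ℂ) := by
  have : ((Real.sqrt n : ℝ) : ℂ)^2 = ((n:ℝ) : ℂ) := by
    rw [← Complex.ofReal_pow, Real.sq_sqrt (by positivity)]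
  rw [mul_pow, Complex.I_sq, this]
  push_cast; ring

lemma hu_conj (n : ℕ) : (starRingEnd ℂ) (Complex.I * (Real.sqrt n : ℂ)) =
    -(Complex.I * (Real.sqrt n : ℂ)) := by
  simp [_root_.map_mul, Complex.conj_I, Complex.conj_ofReal]

/-- The ℚ-span of 1 and u as a subfield of ℂ. -/
noncomputable def ratSpan (n : ℕ) : Subfield ℂ where
  carrier := {z | ∃ p q : ℚ, z = (p : ℂ) + (q : ℂ) * (Complex.I * (Real.sqrt n : ℂ))}
  zero_mem' := ⟨0, 0, by push_cast; ring⟩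
  one_mem' := ⟨1, 0, by push_cast; ring⟩
  add_mem' := by
    rintro x y ⟨p, q, rfl⟩ ⟨p', q', rfl⟩
    exact ⟨p + p', q + q', by push_cast; ring⟩
  neg_mem' := by
    rintro x ⟨p, q, rfl⟩
    exact ⟨-p, -q, by push_cast; ring⟩
  mul_mem' := by
    rintro x y ⟨p, q, rfl⟩ ⟨p', q', rfl⟩
    exact ⟨p * p' - n * (q * q'), p * q' + q * p', by
      push_cast
      linear_combination (q:ℂ) * (q':ℂ) * hu_sq n⟩
  inv_mem' := by
    rintro x ⟨p, q, rfl⟩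
    by_cases hz : p^2 + (n:ℚ) * q^2 = 0
    · have hp2 : p^2 = 0 := by nlinarith [sq_nonneg p, sq_nonneg q,
        (show (0:ℚ) ≤ (n:ℚ) by positivity)]
      have hp : p = 0 := by
        have := pow_eq_zero_iff (n := 2) (by norm_num) |>.mp hp2; exact this
      have hnq : (n:ℚ) * q^2 = 0 := by rw [hp] at hz; linarith [hz]
      have hzero : (p : ℂ) + (q : ℂ) * (Complex.I * (Real.sqrt n : ℂ)) = 0 := by
        rcases mul_eq_zero.mp hnq with hn0 | hq0
        · have : (n:ℕ) = 0 := by exact_mod_cast hn0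
          rw [hp, this]; simp
        · have : q = 0 := by
            have := pow_eq_zero_iff (n := 2) (by norm_num) |>.mp hq0; exact this
          rw [hp, this]; simp
      exact ⟨0, 0, by rw [hzero]; simp⟩
    · have hz' : ((p^2 + (n:ℚ)*q^2 : ℚ) : ℂ) ≠ 0 := fun h => hz (by exact_mod_cast h)
      have key : ((p:ℂ) + (q:ℂ) * (Complex.I * (Real.sqrt n : ℂ))) *
          ((p:ℂ) - (q:ℂ) * (Complex.I * (Real.sqrt n : ℂ)))
          = ((p^2 + (n:ℚ)*q^2 : ℚ) : ℂ) := by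
        push_cast
        linear_combination -(q:ℂ)^2 * hu_sq n
      have hw : ((p / (p^2 + (n:ℚ)*q^2) : ℚ) : ℂ) +
          ((-q / (p^2 + (n:ℚ)*q^2) : ℚ) : ℂ) * (Complex.I * (Real.sqrt n : ℂ)) =
          ((p:ℂ) - (q:ℂ) * (Complex.I * (Real.sqrt n : ℂ))) / ((p^2 + (n:ℚ)*q^2 : ℚ) : ℂ) := by
        push_cast
        field_simp
        ring
      refine ⟨p / (p^2 + (n:ℚ)*q^2), -q / (p^2 + (n:ℚ)*q^2), ?_⟩
      refine inv_eq_of_mul_eq_one_right ?_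
      rw [hw, mul_div_assoc', div_eq_one_iff_eq hz']
      exact key

lemma quadInt_rep (n : ℕ) (hsf : Squarefree n) (hn : 0 < n) (z : ℂ)
    (hz : z ∈ quadIntRing n) :
    ∃ x y : ℤ, 2 * z = (x : ℂ) + (y : ℂ) * (Complex.I * (Real.sqrt n : ℂ)) := by
  obtain ⟨hz1, hz2⟩ := Subring.mem_inf.mp hz
  have hzint : IsIntegral ℤ z := mem_integralClosure_iff ℤ ℂ |>.mp hz2
  have hzf : z ∈ Subfield.closure {Complex.I * (Real.sqrt n : ℂ)} := hz1
  have hle : Subfield.closure {Complex.I * (Real.sqrt n : ℂ)} ≤ ratSpan n :=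
    Subfield.closure_le.mpr (by rintro x rfl; exact ⟨0, 1, by push_cast; ring⟩)
  obtain ⟨p, q, rfl⟩ := hle hzf
  have hcu := hu_conj n
  have hu2 := hu_sq n
  -- conj z
  have hconj : (starRingEnd ℂ) ((p:ℂ) + (q:ℂ) * (Complex.I * (Real.sqrt n : ℂ))) = (p:ℂ) - (q:ℂ) * (Complex.I * (Real.sqrt n : ℂ)) := by
    rw [_root_.map_add, _root_.map_mul, hcu, map_ratCast, map_ratCast]; ring
  have hconj_int : IsIntegral ℤ ((p:ℂ) - (q:ℂ) * (Complex.I * (Real.sqrt n : ℂ))) := by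
    rw [← hconj]; exact hzint.map (starRingEnd ℂ).toIntAlgHom
  -- trace is an integer
  have htr : IsIntegral ℤ (((2*p : ℚ) : ℂ)) := by
    have : ((2*p : ℚ) : ℂ) = ((p:ℂ) + (q:ℂ) * (Complex.I * (Real.sqrt n : ℂ))) + ((p:ℂ) - (q:ℂ) * (Complex.I * (Real.sqrt n : ℂ))) := by
      push_cast; ring
    rw [this]; exact hzint.add hconj_int
  -- norm is an integer
  have hnrm : IsIntegral ℤ (((p^2 + n*q^2 : ℚ) : ℂ)) := by
    have : ((p^2 + n*q^2 : ℚ) : ℂ) = ((p:ℂ) + (q:ℂ) * (Complex.I * (Real.sqrt n : ℂ))) * ((p:ℂ) - (q:ℂ) * (Complex.I * (Real.sqrt n : ℂ))) := by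
      push_cast; linear_combination (q:ℂ)^2 * hu2
    rw [this]; exact hzint.mul hconj_int
  have hinj : Function.Injective (algebraMap ℚ ℂ) := (algebraMap ℚ ℂ).injective
  have hcast : ∀ r : ℚ, algebraMap ℚ ℂ r = (r : ℂ) := fun r => eq_ratCast _ r
  have htrQ : IsIntegral ℤ (2*p : ℚ) := by
    rw [← isIntegral_algebraMap_iff hinj]; rw [hcast]; exact htr
  have hnrmQ : IsIntegral ℤ (p^2 + n*q^2 : ℚ) := by
    rw [← isIntegral_algebraMap_iff hinj]; rw [hcast]; exact hnrm
  obtain ⟨x, hx⟩ := IsIntegrallyClosed.isIntegral_iff.mp htrQ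
  obtain ⟨k, hk⟩ := IsIntegrallyClosed.isIntegral_iff.mp hnrmQ
  rw [eq_intCast] at hx hk
  -- now find y with (y:ℚ) = 2*q
  have hkey : (n:ℚ) * (2*q)^2 = 4*k - x^2 := by
    linear_combination (-4)*hk + ((x:ℚ) + 2*p)*hx
  have hsint : IsIntegral ℤ (((n:ℚ) * (2*q))^2) := by
    have h2 : ((n:ℚ) * (2*q))^2 = (((n * (4*k - x^2)) : ℤ) : ℚ) := by
      push_cast
      linear_combination (n:ℚ) * hkey
    rw [h2]
    have := isIntegral_algebraMap (R := ℤ) (A := ℚ) (x := (n * (4*k - x^2) : ℤ))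
    rwa [eq_intCast] at this
  obtain ⟨s, hs⟩ := IsIntegrallyClosed.exists_algebraMap_eq_of_isIntegral_pow
    (n := 2) (by norm_num) hsint
  rw [eq_intCast] at hs
  -- s^2 = n * (n * (2q)^2) = n * (4k - x^2), and n ∣ s^2
  have hs2 : s^2 = n * (4*k - x^2) := by
    have : ((s^2 : ℤ) : ℚ) = ((n * (4*k - x^2) : ℤ) : ℚ) := by
      push_cast
      linear_combination ((s:ℚ) + (n:ℚ)*(2*q)) * hs + (n:ℚ) * hkey
    exact_mod_cast this
  have hdvd : (n:ℤ) ∣ s := by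
    have hsq : Squarefree (n:ℤ) := Int.squarefree_natCast.mpr hsf
    exact (hsq.dvd_pow_iff_dvd (n := 2) (by norm_num)).mp ⟨4*k - x^2, hs2⟩
  obtain ⟨t, ht⟩ := hdvd
  have hq : (2*q : ℚ) = (t : ℚ) := by
    have hn0 : (n:ℚ) ≠ 0 := by positivity
    have : (n:ℚ) * (2*q) = (n:ℚ) * t := by
      rw [← hs]; exact_mod_cast congrArg (fun z : ℤ => (z:ℚ)) ht
    exact mul_left_cancel₀ hn0 this
  refine ⟨x, t, ?_⟩
  have hx' : ((x:ℚ):ℂ) = 2*(p:ℂ) := by exact_mod_cast congrArg (fun r : ℚ => (r:ℂ)) hx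
  have hq' : 2*(q:ℂ) = ((t:ℚ):ℂ) := by exact_mod_cast congrArg (fun r : ℚ => (r:ℂ)) hq
  push_cast at hx' hq' ⊢
  linear_combination -hx' + hq' * (Complex.I * (Real.sqrt n : ℂ))

lemma cohn_entries (n : ℕ) {γ : Matrix.SpecialLinearGroup (Fin 2) ℂ}
    (hγ : γ ∈ CohnSubgroup n) : ∀ i j, γ.1 i j ∈ quadIntRing n := by
  induction hγ using Subgroup.closure_induction with
  | mem x hx =>
    obtain ⟨α, hα, rfl⟩ := hx
    intro i j
    fin_cases i <;> fin_cases j <;>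
      simp [CohnMatrix] <;>
      first
        | exact hα
        | exact one_mem _
        | exact neg_mem (one_mem _)
        | exact zero_mem _
  | one =>
    intro i j
    have : ((1 : Matrix.SpecialLinearGroup (Fin 2) ℂ) : Matrix (Fin 2) (Fin 2) ℂ) = 1 := rfl
    rw [this]
    fin_cases i <;> fin_cases j <;>
      simp [Matrix.one_apply] <;>
      first
        | exact one_mem _
        | exact zero_mem _
  | mul x y hx hy ihx ihy =>
    intro i j
    have hcoe : ((x * y : Matrix.SpecialLinearGroup (Fin 2) ℂ) :
        Matrix (Fin 2) (Fin 2) ℂ) = (x : Matrix (Fin 2) (Fin 2) ℂ) * y := rfl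
    rw [hcoe, Matrix.mul_apply, Fin.sum_univ_two]
    exact add_mem (mul_mem (ihx i 0) (ihy 0 j)) (mul_mem (ihx i 1) (ihy 1 j))
  | inv x hx ih =>
    intro i j
    rw [Matrix.SpecialLinearGroup.SL2_inv_expl]
    fin_cases i <;> fin_cases j <;> simp <;>
      first
        | exact ih 1 1
        | exact neg_mem (ih 0 1)
        | exact neg_mem (ih 1 0)
        | exact ih 0 1
        | exact ih 1 0
        | exact ih 0 0

/-- For `γ, γ' ∈ 𝒲`, the pairing
`B = −κ(γ)κ'(γ') − κ'(γ)κ(γ') + ξ(γ)conj(ξ(γ')) + ξ(γ')conj(ξ(γ))`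
is a rational integer congruent to `2n` modulo `n²`, and if `n > 3` then `|B| ≥ 2n`. -/
theorem cohnSubgroup_pairing (n : ℕ) (hsf : Squarefree n) (hn : 0 < n)
    (γ γ' : Matrix.SpecialLinearGroup (Fin 2) ℂ)
    (hγ : γ ∈ CohnSubgroup n) (hγ' : γ' ∈ CohnSubgroup n)
    (B : ℂ)
    (hB : B = -(kappa n γ * kappa' n γ') - kappa' n γ * kappa n γ' +
      xi n γ * (starRingEnd ℂ) (xi n γ') + xi n γ' * (starRingEnd ℂ) (xi n γ)) :
    (∃ m : ℤ, B = 2 * n + (n : ℂ) ^ 2 * m) ∧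
    (3 < n → 2 * (n : ℝ) ≤ ‖B‖) := by
  have hu2 := hu_sq n
  have hcu := hu_conj n
  set δ : Matrix.SpecialLinearGroup (Fin 2) ℂ := γ⁻¹ * γ' with hδ_def
  have hδmem : δ ∈ CohnSubgroup n := mul_mem (inv_mem hγ) hγ'
  have hδe := cohn_entries n hδmem
  obtain ⟨xa, ya, ha⟩ := quadInt_rep n hsf hn _ (hδe 0 0)
  obtain ⟨xb, yb, hb⟩ := quadInt_rep n hsf hn _ (hδe 0 1)
  obtain ⟨xc, yc, hc⟩ := quadInt_rep n hsf hn _ (hδe 1 0)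
  obtain ⟨xd, yd, hd⟩ := quadInt_rep n hsf hn _ (hδe 1 1)
  have ha2 : δ.1 0 0 = (((xa:ℂ) + (ya:ℂ) * (Complex.I * (Real.sqrt n : ℂ))))/2 := by
    rw [eq_div_iff (two_ne_zero' ℂ)]; linear_combination ha
  have hb2 : δ.1 0 1 = (((xb:ℂ) + (yb:ℂ) * (Complex.I * (Real.sqrt n : ℂ))))/2 := by
    rw [eq_div_iff (two_ne_zero' ℂ)]; linear_combination hb
  have hc2 : δ.1 1 0 = (((xc:ℂ) + (yc:ℂ) * (Complex.I * (Real.sqrt n : ℂ))))/2 := by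
    rw [eq_div_iff (two_ne_zero' ℂ)]; linear_combination hc
  have hd2 : δ.1 1 1 = (((xd:ℂ) + (yd:ℂ) * (Complex.I * (Real.sqrt n : ℂ))))/2 := by
    rw [eq_div_iff (two_ne_zero' ℂ)]; linear_combination hd
  have hprod : γ * δ = γ' := mul_inv_cancel_left γ γ'
  have hM : (γ' : Matrix (Fin 2) (Fin 2) ℂ) = (γ : Matrix (Fin 2) (Fin 2) ℂ) * δ := by
    rw [← hprod]; rfl
  have hA' : γ'.1 0 0 = γ.1 0 0 * δ.1 0 0 + γ.1 0 1 * δ.1 1 0 := by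
    rw [hM, Matrix.mul_apply, Fin.sum_univ_two]
  have hB' : γ'.1 0 1 = γ.1 0 0 * δ.1 0 1 + γ.1 0 1 * δ.1 1 1 := by
    rw [hM, Matrix.mul_apply, Fin.sum_univ_two]
  have hC' : γ'.1 1 0 = γ.1 1 0 * δ.1 0 0 + γ.1 1 1 * δ.1 1 0 := by
    rw [hM, Matrix.mul_apply, Fin.sum_univ_two]
  have hD' : γ'.1 1 1 = γ.1 1 0 * δ.1 0 1 + γ.1 1 1 * δ.1 1 1 := by
    rw [hM, Matrix.mul_apply, Fin.sum_univ_two]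
  have hdg : γ.1 0 0 * γ.1 1 1 - γ.1 0 1 * γ.1 1 0 = 1 := by
    have h := γ.2; rwa [Matrix.det_fin_two] at h
  have hdd : δ.1 0 0 * δ.1 1 1 - δ.1 0 1 * δ.1 1 0 = 1 := by
    have h := δ.2; rwa [Matrix.det_fin_two] at h
  have hdgc : (starRingEnd ℂ) (γ.1 0 0) * (starRingEnd ℂ) (γ.1 1 1) -
      (starRingEnd ℂ) (γ.1 0 1) * (starRingEnd ℂ) (γ.1 1 0) = 1 := by
    have h := congrArg (starRingEnd ℂ) hdg
    simpa only [map_sub, _root_.map_mul, _root_.map_one] using h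
  -- the key quantity E
  have hE : δ.1 0 0 * (starRingEnd ℂ) (δ.1 1 1) + (starRingEnd ℂ) (δ.1 0 0) * δ.1 1 1 -
      δ.1 0 1 * (starRingEnd ℂ) (δ.1 1 0) - (starRingEnd ℂ) (δ.1 0 1) * δ.1 1 0 =
      2 + (n:ℂ) * ((ya:ℂ) * (yd:ℂ) - (yb:ℂ) * (yc:ℂ)) := by
    rw [ha2, hb2, hc2, hd2] at hdd ⊢
    have hddc := congrArg (starRingEnd ℂ) hdd
    simp only [map_div₀, map_add, map_sub, _root_.map_mul, _root_.map_one, map_intCast,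
      map_ofNat, hcu] at hddc ⊢
    linear_combination hdd + hddc - ((ya:ℂ) * (yd:ℂ) - (yb:ℂ) * (yc:ℂ)) * hu2
  have key : B = 2 * n + (n : ℂ) ^ 2 * ((ya * yd - yb * yc : ℤ) : ℂ) := by
    simp only [kappa, kappa', xi] at hB
    rw [hA', hB', hC', hD'] at hB
    simp only [map_add, map_sub, _root_.map_mul, hcu, Complex.conj_conj] at hB
    rw [hB]
    push_cast
    linear_combination
      (-(2 + (n:ℂ) * ((ya:ℂ) * (yd:ℂ) - (yb:ℂ) * (yc:ℂ))) *
        (Complex.I * (Real.sqrt n : ℂ))^2 *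
        ((starRingEnd ℂ) (γ.1 0 0) * (starRingEnd ℂ) (γ.1 1 1) -
          (starRingEnd ℂ) (γ.1 0 1) * (starRingEnd ℂ) (γ.1 1 0))) * hdg +
      (-(2 + (n:ℂ) * ((ya:ℂ) * (yd:ℂ) - (yb:ℂ) * (yc:ℂ))) *
        (Complex.I * (Real.sqrt n : ℂ))^2) * hdgc +
      (-(2 + (n:ℂ) * ((ya:ℂ) * (yd:ℂ) - (yb:ℂ) * (yc:ℂ)))) * hu2 +
      (-((Complex.I * (Real.sqrt n : ℂ))^2 *
        (γ.1 0 0 * γ.1 1 1 - γ.1 0 1 * γ.1 1 0) *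
        ((starRingEnd ℂ) (γ.1 0 0) * (starRingEnd ℂ) (γ.1 1 1) -
          (starRingEnd ℂ) (γ.1 0 1) * (starRingEnd ℂ) (γ.1 1 0)))) * hE
  refine ⟨⟨ya * yd - yb * yc, key⟩, ?_⟩
  intro hn3
  set m : ℤ := ya * yd - yb * yc with hm_def
  have hBint : B = (((2 * (n:ℤ) + (n:ℤ)^2 * m) : ℤ) : ℂ) := by
    rw [key]; push_cast; ring
  rw [hBint, Complex.norm_intCast]
  have hint : 2 * (n:ℤ) ≤ |2 * (n:ℤ) + (n:ℤ)^2 * m| := by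
    have hn4 : (4:ℤ) ≤ (n:ℤ) := by exact_mod_cast hn3
    rcases le_or_gt 0 m with hm | hm
    · rw [_root_.abs_of_nonneg (by positivity)]
      nlinarith
    · have hm1 : m ≤ -1 := by omega
      rw [_root_.abs_of_nonpos (by nlinarith)]
      nlinarith
  calc 2 * (n:ℝ) = ((2 * (n:ℤ) : ℤ) : ℝ) := by push_cast; ring
    _ ≤ ((|2 * (n:ℤ) + (n:ℤ)^2 * m| : ℤ) : ℝ) := by exact_mod_cast hint
    _ = |((2 * (n:ℤ) + (n:ℤ)^2 * m : ℤ) : ℝ)| := by push_cast; ring
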